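/- Let A be a commutative algebra. The map F : J(A) → I(A) sending φ (with idempotent e) to the isomorphism of ideals φ|_{Ae} : Ae → Aφ(e) is an isomorphism of semigroups, with inverse sending an isomorphism of unital ideals θ : Ae → Aθ(e) to the endomorphism φ_θ(a) = θ(ae). -/
import Mathlib


/-- The unital ideal `A·e` generated by an element `e` of a commutative ring. -/
def idealOf {A : Type*} [CommRing A] (e : A) : Set A := Set.range (fun a => a * e)

/-- `φ : A → A` is multiplicative. -/
def Mult {A : Type*} [CommRing A] (φ : A → A) : Prop := ∀ x y : A, φ (x * y) = φ x * φ y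

/-- `e` is an associated idempotent of `φ ∈ J(A)`: `e` is idempotent,
`φ(A) = A·φ(e)`, and `φ` restricts to a bijection `Ae → Aφ(e)`. -/
def JData {A : Type*} [CommRing A] (φ : A → A) (e : A) : Prop :=
  e * e = e ∧ Set.range φ = idealOf (φ e) ∧ Set.BijOn φ (idealOf e) (idealOf (φ e))

section Aux

variable {A : Type*} [CommRing A]

lemma mem_idealOf {e x : A} : x ∈ idealOf e ↔ ∃ a, a * e = x := Iff.rfl

lemma self_mem_idealOf {e : A} (he : e * e = e) : e ∈ idealOf e := ⟨e, he⟩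

lemma idealOf_absorb {e x : A} (he : e * e = e) (hx : x ∈ idealOf e) : x * e = x := by
  obtain ⟨a, rfl⟩ := hx; rw [mul_assoc, he]

lemma mul_mem_idealOf {e x : A} (hx : x ∈ idealOf e) (c : A) : c * x ∈ idealOf e := by
  obtain ⟨a, rfl⟩ := hx
  exact ⟨c * a, show c * a * e = c * (a * e) from mul_assoc c a e⟩

lemma mem_idealOf_iff {e x : A} (he : e * e = e) : x ∈ idealOf e ↔ x * e = x :=
  ⟨idealOf_absorb he, fun h => ⟨x, h⟩⟩

/-- If `φ` is multiplicative with `e * e = e`, then `φ e` is idempotent. -/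
lemma phi_idem {φ : A → A} (hm : Mult φ) {e : A} (he : e * e = e) :
    φ e * φ e = φ e := by rw [← hm, he]

/-- For `φ ∈ J(A)` with idempotent `e`, `φ (x * e) = φ x` for all `x`. -/
lemma phi_absorb {φ : A → A} (hm : Mult φ) {e : A} (he : e * e = e)
    (hr : Set.range φ = idealOf (φ e)) (x : A) : φ (x * e) = φ x := by
  rw [hm]
  exact idealOf_absorb (phi_idem hm he) (hr ▸ Set.mem_range_self x)

lemma phi_mem {φ : A → A} {e : A} (hr : Set.range φ = idealOf (φ e)) (x : A) :
    φ x ∈ idealOf (φ e) := hr ▸ Set.mem_range_self x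

end Aux

/-- **`F : J(A) → I(A)`, `φ ↦ φ|_{Ae}`, is an isomorphism of semigroups.**
Concretely: (1) the idempotent `e` associated to `φ ∈ J(A)` is unique, so `F` is
well defined; (2) `F` is injective: elements of `J(A)` with the same associated
idempotent and the same restriction to `Ae` coincide; (3) `F` is surjective, with
inverse sending an isomorphism of unital ideals `θ : Ae → Aθ(e)` to
`φ_θ(a) = θ(a·e)`, which lies in `J(A)` with idempotent `e` and restriction `θ`;
(4) `F` turns composition in `J(A)` into the composition of partial isomorphisms:
for `φ, ψ ∈ J(A)` with idempotents `e, f`, the composite `ψ∘φ` lies in `J(A)` with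
idempotent `g = (φ|_{Ae})⁻¹(φ(e)·f)`, whose ideal `Ag` is exactly the domain
`{x ∈ Ae | φ(x) ∈ Af}` of the composite partial bijection. -/
theorem JA_iso_IA {k A : Type*} [CommRing k] [CommRing A] [Algebra k A] :
    -- (1) uniqueness of the associated idempotent
    (∀ φ : A →ₗ[k] A, Mult ⇑φ → ∀ e f : A, JData ⇑φ e → JData ⇑φ f → e = f) ∧
    -- (2) injectivity of F
    (∀ φ ψ : A →ₗ[k] A, Mult ⇑φ → Mult ⇑ψ → ∀ e : A, JData ⇑φ e → JData ⇑ψ e →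
      Set.EqOn ⇑φ ⇑ψ (idealOf e) → φ = ψ) ∧
    -- (3) surjectivity of F, via θ ↦ φ_θ = θ ∘ (·*e)
    (∀ (θ : A →ₗ[k] A) (e : A), e * e = e →
      (∀ x ∈ idealOf e, ∀ y ∈ idealOf e, θ (x * y) = θ x * θ y) →
      Set.BijOn ⇑θ (idealOf e) (idealOf (θ e)) →
      Mult ⇑(θ ∘ₗ LinearMap.mulRight k e) ∧
      JData ⇑(θ ∘ₗ LinearMap.mulRight k e) e ∧
      Set.EqOn ⇑(θ ∘ₗ LinearMap.mulRight k e) ⇑θ (idealOf e)) ∧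
    -- (4) compatibility with composition
    (∀ φ ψ : A →ₗ[k] A, Mult ⇑φ → Mult ⇑ψ → ∀ e f : A, JData ⇑φ e → JData ⇑ψ f →
      ∀ g : A, g ∈ idealOf e → φ g = φ e * f →
        Mult ⇑(ψ ∘ₗ φ) ∧ JData ⇑(ψ ∘ₗ φ) g ∧
        idealOf g = {x ∈ idealOf e | φ x ∈ idealOf f}) := by
  refine ⟨?part1, ?part2, ?part3, ?part4⟩
  case part1 =>
    rintro φ hm e f ⟨he, hre, hbe⟩ ⟨hf, hrf, hbf⟩
    have hef_e : e * f ∈ idealOf e := ⟨f, mul_comm f e⟩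
    have hef_f : e * f ∈ idealOf f := ⟨e, rfl⟩
    have h1 : φ (e * f) = φ e := by
      rw [hm]
      exact idealOf_absorb (phi_idem hm hf) (hrf ▸ Set.mem_range_self e)
    have h2 : φ (e * f) = φ f := by
      rw [hm, mul_comm]
      exact idealOf_absorb (phi_idem hm he) (hre ▸ Set.mem_range_self f)
    have he' : e * f = e := hbe.injOn hef_e (self_mem_idealOf he) h1
    have hf' : e * f = f := hbf.injOn hef_f (self_mem_idealOf hf) h2
    rw [← he', hf']
  case part2 =>
    rintro φ ψ hmφ hmψ e ⟨he, hrφ, _⟩ ⟨_, hrψ, _⟩ heq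
    ext a
    calc φ a = φ (a * e) := (phi_absorb hmφ he hrφ a).symm
      _ = ψ (a * e) := heq ⟨a, rfl⟩
      _ = ψ a := phi_absorb hmψ he hrψ a
  case part3 =>
    intro θ e he hmul hb
    have happ : ∀ a, (θ ∘ₗ LinearMap.mulRight k e) a = θ (a * e) := fun a => rfl
    have hθe : (θ ∘ₗ LinearMap.mulRight k e) e = θ e := by rw [happ, he]
    have heqon : Set.EqOn ⇑(θ ∘ₗ LinearMap.mulRight k e) ⇑θ (idealOf e) := by
      intro x hx
      rw [happ, idealOf_absorb he hx]
    have hmult : Mult ⇑(θ ∘ₗ LinearMap.mulRight k e) := by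
      intro x y
      rw [happ, happ, happ]
      have : x * y * e = (x * e) * (y * e) := by
        have h2 : (x * e) * (y * e) = x * y * (e * e) := by ring
        rw [h2, he]
      rw [this, hmul (x * e) ⟨x, rfl⟩ (y * e) ⟨y, rfl⟩]
    refine ⟨hmult, ⟨he, ?_, ?_⟩, heqon⟩
    · rw [hθe]
      have : Set.range ⇑(θ ∘ₗ LinearMap.mulRight k e) = θ '' idealOf e := by
        rw [LinearMap.coe_comp, Set.range_comp]
        rfl
      rw [this, hb.image_eq]
    · rw [hθe]
      exact hb.congr fun x hx => (heqon hx).symm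
  case part4 =>
    rintro φ ψ hmφ hmψ e f ⟨he, hrφ, hbφ⟩ ⟨hf, hrψ, hbψ⟩ g hg hφg
    have hφe : φ e * φ e = φ e := phi_idem hmφ he
    have hψf : ψ f * ψ f = ψ f := phi_idem hmψ hf
    have hφabs : ∀ x, φ (x * e) = φ x := phi_absorb hmφ he hrφ
    have hψabs : ∀ x, ψ (x * f) = ψ x := phi_absorb hmψ hf hrψ
    have hφmem : ∀ x, φ x ∈ idealOf (φ e) := phi_mem hrφ
    have hψmem : ∀ x, ψ x ∈ idealOf (ψ f) := phi_mem hrψ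
    -- g is idempotent
    have hφgf : φ g ∈ idealOf f := hφg ▸ ⟨φ e, rfl⟩
    have hgg : g * g = g := by
      have h1 : φ (g * g) = φ g := by
        rw [hmφ, hφg]
        calc φ e * f * (φ e * f) = (φ e * φ e) * (f * f) := by ring
          _ = φ e * f := by rw [hφe, hf]
      exact hbφ.injOn (mul_mem_idealOf hg g) hg h1
    have hφgg : φ g * φ g = φ g := by rw [← hmφ, hgg]
    have hge : g * e = g := idealOf_absorb he hg
    -- the ideal equality
    have hideq : idealOf g = {x ∈ idealOf e | φ x ∈ idealOf f} := by
      ext x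
      constructor
      · rintro ⟨a, rfl⟩
        exact ⟨mul_mem_idealOf hg a, by rw [hmφ]; exact mul_mem_idealOf hφgf (φ a)⟩
      · rintro ⟨hxe, hxf⟩
        have h1 : φ (x * g) = φ x := by
          rw [hmφ, hφg, ← mul_assoc, idealOf_absorb hφe (hφmem x),
            idealOf_absorb hf hxf]
        have : x * g = x := hbφ.injOn (mul_mem_idealOf hg x) hxe h1
        exact ⟨x, this⟩
    -- sub-lemma: idealOf (φ g) ⊆ φ '' idealOf g
    have hsub : idealOf (φ g) ⊆ φ '' idealOf g := by
      rintro _ ⟨d, rfl⟩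
      have hy : d * φ g ∈ idealOf (φ e) := by
        have : φ g * φ e = φ g := by rw [← hmφ, hge]
        exact ⟨d * φ g, show d * φ g * φ e = d * φ g by rw [mul_assoc, this]⟩
      obtain ⟨x, hxe, hx⟩ := hbφ.surjOn hy
      have hxg : x ∈ idealOf g := by
        rw [hideq]
        exact ⟨hxe, hx ▸ mul_mem_idealOf hφgf d⟩
      exact ⟨x, hxg, hx⟩
    -- multiplicativity of the composite
    have hmult : Mult ⇑(ψ ∘ₗ φ) := by
      intro x y
      simp only [LinearMap.coe_comp, Function.comp_apply]
      rw [hmφ, hmψ]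
    have happ : ∀ a, (ψ ∘ₗ φ) a = ψ (φ a) := fun a => rfl
    -- key absorption : ψ (φ a) = ψ (φ a) * ψ (φ g)
    have habs : ∀ a, ψ (φ a) = ψ (φ a) * ψ (φ g) := by
      intro a
      have h1 : φ a * φ g = φ a * f := by
        rw [hφg, ← mul_assoc, idealOf_absorb hφe (hφmem a)]
      rw [← hmψ, h1, hψabs]
    -- BijOn of the composite
    have hmaps : Set.MapsTo ⇑(ψ ∘ₗ φ) (idealOf g) (idealOf ((ψ ∘ₗ φ) g)) := by
      rintro _ ⟨a, rfl⟩
      rw [happ, happ, hmφ, hmψ]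
      exact ⟨ψ (φ a), rfl⟩
    have hinj : Set.InjOn ⇑(ψ ∘ₗ φ) (idealOf g) := by
      intro x hx y hy hxy
      have hx' := hideq ▸ hx
      have hy' := hideq ▸ hy
      have h1 : φ x = φ y := hbψ.injOn (hx'.2) (hy'.2) hxy
      exact hbφ.injOn hx'.1 hy'.1 h1
    have hsurj : Set.SurjOn ⇑(ψ ∘ₗ φ) (idealOf g) (idealOf ((ψ ∘ₗ φ) g)) := by
      rintro _ ⟨b, rfl⟩
      rw [happ]
      have h1 : b * ψ (φ g) ∈ idealOf (ψ f) := mul_mem_idealOf (hψmem (φ g)) b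
      obtain ⟨c, hcf, hc⟩ := hbψ.surjOn h1
      obtain ⟨x, hxg, hx⟩ := hsub (⟨c, rfl⟩ : c * φ g ∈ idealOf (φ g))
      refine ⟨x, hxg, ?_⟩
      rw [happ, hx, hmψ, hc, mul_assoc, ← hmψ, hφgg]
    -- range of the composite
    have hrange : Set.range ⇑(ψ ∘ₗ φ) = idealOf ((ψ ∘ₗ φ) g) := by
      apply Set.Subset.antisymm
      · rintro _ ⟨a, rfl⟩
        exact ⟨ψ (φ a), (habs a).symm⟩
      · exact fun y hy => (hsurj hy).imp fun x hx => hx.2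
    exact ⟨hmult, ⟨hgg, hrange, hmaps, hinj, hsurj⟩, hideq⟩
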